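/- Let β : ℤ → ℝ satisfy β(k) > 0 for all k, and let m² > 0. Fix n ∈ ℤ. On ℓ²(ℤ) define the diagonal operator D by (Dg)(k) = (β(k+n) + β(-k))·g(k). Then D is injective on its natural domain, and for every finitely supported f : ℤ → ℂ with f(k) = 0 whenever n + 2k < 0, setting g(k) = f(k)/(β(k+n) + β(-k)), one has ∑_{k∈ℤ} conj(f(-k-n))·g(k) = (1/2)·[if n is even then |f(-n/2)|²/β(n/2) else 0] ≥ 0. -/

import Mathlib

open scoped ComplexConjugate

/-- invariant-case reflection positivity on a single rotational
component. With `β > 0`, the diagonal operator `D` with symbol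
`β(k+n) + β(-k)` is injective, and for finitely supported `f` vanishing on
`{n + 2k < 0}`, with `g = D⁻¹ f`, the pairing `∑ conj(f(-k-n)) g(k)` equals the
nonnegative boundary term `(1/2)|f(-n/2)|²/β(n/2)` (for `n` even; `0` for `n` odd). -/
theorem reflection_positivity_invariant (n : ℤ) (β : ℤ → ℝ)
    (hβ : ∀ k : ℤ, 0 < β k) (m2 : ℝ) (hm2 : 0 < m2)
    (f : ℤ →₀ ℂ) (hf : ∀ k : ℤ, n + 2 * k < 0 → f k = 0)
    (g : ℤ → ℂ) (hg : ∀ k : ℤ, g k = f k / ((β (k + n) + β (-k) : ℝ) : ℂ)) :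
    (∀ g₁ g₂ : ℤ → ℂ,
       (∀ k : ℤ, ((β (k + n) + β (-k) : ℝ) : ℂ) * g₁ k =
         ((β (k + n) + β (-k) : ℝ) : ℂ) * g₂ k) → g₁ = g₂) ∧
    (∑' k : ℤ, conj (f (-k - n)) * g k) =
      (((1 / 2) * (if Even n then ‖f (-(n / 2))‖ ^ 2 / β (n / 2) else 0) : ℝ) : ℂ) ∧
    0 ≤ (1 / 2) * (if Even n then ‖f (-(n / 2))‖ ^ 2 / β (n / 2) else 0) := by
  have hpos : ∀ k : ℤ, (0:ℝ) < β (k + n) + β (-k) := fun k => add_pos (hβ _) (hβ _)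
  refine ⟨?_, ?_, ?_⟩
  · intro g₁ g₂ h
    funext k
    have hne : ((β (k + n) + β (-k) : ℝ) : ℂ) ≠ 0 := by
      exact_mod_cast (hpos k).ne'
    exact mul_left_cancel₀ hne (h k)
  · have hzero : ∀ k : ℤ, n + 2 * k ≠ 0 → conj (f (-k - n)) * g k = 0 := by
      intro k hk
      rcases lt_or_gt_of_ne hk with h | h
      · rw [hg k, hf k h, zero_div, mul_zero]
      · have h2 : n + 2 * (-k - n) < 0 := by omega
        rw [hf _ h2, map_zero, zero_mul]
    by_cases hE : Even n
    · obtain ⟨m, hm⟩ := hE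
      have hd : n / 2 = m := by omega
      have := tsum_eq_single (L := SummationFilter.unconditional ℤ) (f := fun k : ℤ => conj (f (-k - n)) * g k) (-m)
        (fun k hk => hzero k (by omega))
      rw [this]
      show conj (f (-(-m) - n)) * g (-m) = _
      rw [hg]
      have e1 : -(-m) - n = -m := by omega
      have e2 : -m + n = m := by omega
      rw [e1, e2, neg_neg, if_pos ⟨m, hm⟩, hd]
      rw [div_eq_mul_inv, ← mul_assoc, Complex.conj_mul']
      have hβm : (β m : ℝ) ≠ 0 := (hβ m).ne'
      push_cast
      field_simp
      ring
    · have hall : ∀ k : ℤ, conj (f (-k - n)) * g k = 0 := by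
        intro k
        refine hzero k ?_
        intro hc
        exact hE ⟨-k, by omega⟩
      rw [if_neg hE]
      simp [hall]
  · by_cases hE : Even n
    · rw [if_pos hE]
      exact mul_nonneg (by norm_num) (div_nonneg (sq_nonneg _) (hβ _).le)
    · rw [if_neg hE]
      norm_num
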